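/- Let χ = (P₁,P₂,P₃,P₄) be a vector field on S¹×S² of degree n (i.e., max deg Pᵢ = n) with P₄ ≠ 0 (equivalently, χ has only finitely many invariant parallel hyperplanes). Then the number of real numbers k such that the hyperplane x₄ = k is invariant under χ — equivalently, such that (x₄ − k) divides P₄ in ℝ[x₁,x₂,x₃,x₄] — is at most n − 1. Moreover, this bound is sharp: for every n ≥ 1 there exists a vector field on S¹×S² of degree n having exactly n − 1 distinct invariant parallel hyperplanes. -/

import Mathlib

open MvPolynomial

/-- The action of the polynomial vector field `χ = (P 0, P 1, P 2, P 3)` on a polynomial: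
`χf = Σᵢ Pᵢ ∂f/∂xᵢ`. -/
noncomputable def chi (P : Fin 4 → MvPolynomial (Fin 4) ℝ)
    (f : MvPolynomial (Fin 4) ℝ) : MvPolynomial (Fin 4) ℝ :=
  ∑ i, P i * pderiv i f

/-- `G_a = (x₁² + x₂² - a²)² + x₃² + x₄² - 1`, whose zero set is `S¹ × S²`. -/
noncomputable def Ga (a : ℝ) : MvPolynomial (Fin 4) ℝ :=
  (X 0 ^ 2 + X 1 ^ 2 - C (a ^ 2)) ^ 2 + X 2 ^ 2 + X 3 ^ 2 - 1

lemma pd0 (a : ℝ) : pderiv (0 : Fin 4) (Ga a) = 4 * X 0 * (X 0 ^ 2 + X 1 ^ 2 - C (a ^ 2)) := by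
  simp [Ga, pderiv_X, Pi.single_apply]; ring
lemma pd1 (a : ℝ) : pderiv (1 : Fin 4) (Ga a) = 4 * X 1 * (X 0 ^ 2 + X 1 ^ 2 - C (a ^ 2)) := by
  simp [Ga, pderiv_X, Pi.single_apply]; ring
lemma pd2 (a : ℝ) : pderiv (2 : Fin 4) (Ga a) = 2 * X 2 := by
  simp [Ga, pderiv_X, Pi.single_apply]
lemma pd3 (a : ℝ) : pderiv (3 : Fin 4) (Ga a) = 2 * X 3 := by
  simp [Ga, pderiv_X, Pi.single_apply]

-- the complex evaluation point
noncomputable def zz (a : ℝ) : ℂ := (Real.sqrt (a^4 - 1) : ℂ) * Complex.I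
noncomputable def gg (a : ℝ) : Fin 4 → ℂ := ![0, 0, 0, zz a]

lemma ha4 (a : ℝ) (ha : 1 < a) : (0:ℝ) < a^4 - 1 := by nlinarith [sq_nonneg a, sq_nonneg (a+1), sq_nonneg (a-1)]
lemma hs_pos (a : ℝ) (ha : 1 < a) : 0 < Real.sqrt (a^4 - 1) := Real.sqrt_pos.mpr (ha4 a ha)
lemma zz_im (a : ℝ) : (zz a).im = Real.sqrt (a^4 - 1) := by
  rw [zz, Complex.mul_I_im]; simp
lemma zz_sq (a : ℝ) (ha : 1 < a) : zz a ^ 2 = 1 - (a:ℂ)^4 := by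
  rw [zz, mul_pow, Complex.I_sq]
  rw [← Complex.ofReal_pow, Real.sq_sqrt (ha4 a ha).le]
  push_cast; ring
lemma zz_ne (a : ℝ) (ha : 1 < a) (k : ℝ) : zz a - (k : ℂ) ≠ 0 := by
  intro h
  have := congrArg Complex.im h
  rw [Complex.sub_im, zz_im, Complex.ofReal_im, Complex.zero_im, sub_zero] at this
  exact absurd this (hs_pos a ha).ne'

lemma aeval_Ga (a : ℝ) (ha : 1 < a) : aeval (gg a) (Ga a) = 0 := by
  have h : aeval (gg a) (Ga a)
      = ((0:ℂ)^2 + 0^2 - (a:ℂ)^2)^2 + 0^2 + (zz a)^2 - 1 := by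
    simp [Ga, gg, Complex.coe_algebraMap]
  rw [h, zz_sq a ha]; ring

lemma aeval_chi (a : ℝ) (P : Fin 4 → MvPolynomial (Fin 4) ℝ) :
    aeval (gg a) (chi P (Ga a)) = aeval (gg a) (P 3) * (2 * zz a) := by
  have e0 : aeval (gg a) (pderiv (0 : Fin 4) (Ga a)) = 0 := by rw [pd0]; simp [gg]
  have e1 : aeval (gg a) (pderiv (1 : Fin 4) (Ga a)) = 0 := by rw [pd1]; simp [gg]
  have e2 : aeval (gg a) (pderiv (2 : Fin 4) (Ga a)) = 0 := by rw [pd2]; simp [gg]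
  have e3 : aeval (gg a) (pderiv (3 : Fin 4) (Ga a)) = 2 * zz a := by rw [pd3]; simp [gg]
  rw [chi, Fin.sum_univ_four, map_add, map_add, map_add, map_mul, map_mul, map_mul, map_mul,
    e0, e1, e2, e3]
  ring

noncomputable def ee : MvPolynomial (Fin 4) ℝ ≃ₐ[ℝ] Polynomial (MvPolynomial (Fin 3) ℝ) :=
  (renameEquiv ℝ (Equiv.swap (0 : Fin 4) 3)).trans (finSuccEquiv ℝ 3)
lemma ee_X3 : ee (X 3) = Polynomial.X := by
  simp [ee, renameEquiv_apply, rename_X, finSuccEquiv_X_zero]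
lemma ee_C (r : ℝ) : ee (C r) = Polynomial.C (C r) := by
  simp [ee, renameEquiv_apply, finSuccEquiv_apply]
lemma ee_lin (k : ℝ) : ee (X 3 - C k) = Polynomial.X - Polynomial.C (C k) := by
  rw [map_sub, ee_X3, ee_C]
lemma ee_apply (f : MvPolynomial (Fin 4) ℝ) :
    ee f = finSuccEquiv ℝ 3 (rename (Equiv.swap (0 : Fin 4) 3) f) := rfl
lemma td_rename_swap (p : MvPolynomial (Fin 4) ℝ) :
    (rename (⇑(Equiv.swap (0 : Fin 4) 3)) p).totalDegree = p.totalDegree := by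
  apply le_antisymm (totalDegree_rename_le _ _)
  have hcomp : (⇑(Equiv.swap (0 : Fin 4) 3)) ∘ (⇑(Equiv.swap (0 : Fin 4) 3)) = id := by
    funext x; simp [Equiv.swap_apply_self]
  conv_lhs => rw [show p = rename (⇑(Equiv.swap (0 : Fin 4) 3))
    (rename (⇑(Equiv.swap (0 : Fin 4) 3)) p) by
      rw [rename_rename, hcomp, rename_id, AlgHom.id_apply]]
  exact totalDegree_rename_le _ _
lemma ee_dvd_iff (f g : MvPolynomial (Fin 4) ℝ) : f ∣ g ↔ ee f ∣ ee g := by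
  constructor
  · exact fun h => map_dvd ee.toAlgHom h
  · intro h
    have := map_dvd ee.symm.toAlgHom h
    simpa using this
lemma natDegree_ee (f : MvPolynomial (Fin 4) ℝ) : (ee f).natDegree = degreeOf 3 f := by
  rw [ee_apply, natDegree_finSuccEquiv]
  have := degreeOf_rename_of_injective (Equiv.swap (0 : Fin 4) 3).injective (p := f) 3
  simpa using this
lemma eq_C_of_td_zero (p : MvPolynomial (Fin 3) ℝ) (h : p.totalDegree = 0) :
    p = C (coeff 0 p) := by
  have hsupp := (totalDegree_eq_zero_iff (Fin 3) p).mp h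
  ext m
  rcases eq_or_ne m 0 with rfl | hm
  · simp
  · rw [coeff_C, if_neg (Ne.symm hm)]
    by_contra hc
    exact hm (Finsupp.ext fun x => hsupp m (mem_support_iff.mpr hc) x)

lemma part1 (a : ℝ) (ha : 1 < a) (n : ℕ) (P : Fin 4 → MvPolynomial (Fin 4) ℝ)
    (hK : ∃ K : MvPolynomial (Fin 4) ℝ, chi P (Ga a) = K * Ga a)
    (hdeg : (Finset.univ.sup fun i => (P i).totalDegree) = n)
    (hP3 : P 3 ≠ 0) :
    {k : ℝ | (X 3 - C k) ∣ P 3}.Finite ∧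
    {k : ℝ | (X 3 - C k) ∣ P 3}.ncard ≤ n - 1 := by
  classical
  set S := {k : ℝ | (X 3 - C k) ∣ P 3} with hS
  set p : Polynomial (MvPolynomial (Fin 3) ℝ) := ee (P 3) with hpdef
  have hp : p ≠ 0 := by
    intro h
    apply hP3
    apply ee.injective
    rw [← hpdef, h, map_zero]
  have hiff : ∀ k : ℝ, k ∈ S ↔ p.IsRoot (C k) := by
    intro k
    rw [hS, Set.mem_setOf_eq, ee_dvd_iff, ee_lin, ← hpdef, Polynomial.dvd_iff_isRoot]
  have hfin : S.Finite := by
    have : S = (fun k : ℝ => (C k : MvPolynomial (Fin 3) ℝ)) ⁻¹' {x | p.IsRoot x} := by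
      ext k; exact hiff k
    rw [this]
    exact Set.Finite.preimage (Set.injOn_of_injective (C_injective _ _))
      (Polynomial.finite_setOf_isRoot hp)
  refine ⟨hfin, ?_⟩
  have htd : (P 3).totalDegree ≤ n := by
    rw [← hdeg]
    exact Finset.le_sup (f := fun i => (P i).totalDegree) (Finset.mem_univ 3)
  have hnatp : p.natDegree ≤ n := by
    rw [hpdef, natDegree_ee]
    exact (degreeOf_le_totalDegree _ 3).trans htd
  set T : Finset ℝ := hfin.toFinset with hT
  set M : Multiset (MvPolynomial (Fin 3) ℝ) := T.val.map (fun k => C k) with hM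
  have hMnodup : M.Nodup := T.nodup.map (C_injective _ _)
  have hMroots : M ≤ p.roots := by
    rw [Multiset.le_iff_count]
    intro r
    by_cases hr : r ∈ M
    · rw [Multiset.count_eq_one_of_mem hMnodup hr]
      obtain ⟨k, hk, rfl⟩ := Multiset.mem_map.mp hr
      rw [Polynomial.count_roots]
      have hkS : k ∈ S := hfin.mem_toFinset.mp hk
      exact (Polynomial.rootMultiplicity_pos hp).mpr ((hiff k).mp hkS)
    · rw [Multiset.count_eq_zero_of_notMem hr]
      exact Nat.zero_le _
  have hScard : S.ncard = T.card := by rw [hT, Set.ncard_eq_toFinset_card _ hfin]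
  have hMcard : Multiset.card M = T.card := by rw [hM, Multiset.card_map]; rfl
  have hcard : S.ncard ≤ n := by
    rw [hScard, ← hMcard]
    exact le_trans (Multiset.card_le_card hMroots) (le_trans (Polynomial.card_roots' p) hnatp)
  by_contra hcon
  have hSn : S.ncard = n ∧ 1 ≤ n := by omega
  obtain ⟨hSn, hn1⟩ := hSn
  -- now the structure of P 3
  set W : Polynomial (MvPolynomial (Fin 3) ℝ) :=
    (M.map fun r => Polynomial.X - Polynomial.C r).prod with hW
  have hWdvd : W ∣ p := (Multiset.prod_X_sub_C_dvd_iff_le_roots hp M).mpr hMroots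
  obtain ⟨q, hpq⟩ := hWdvd
  have hWmonic : W.Monic :=
    Polynomial.monic_multiset_prod_of_monic _ _ fun r _ => Polynomial.monic_X_sub_C r
  have hWdeg : W.natDegree = n := by
    rw [hW, Polynomial.natDegree_multiset_prod_X_sub_C_eq_card, hMcard, ← hScard, hSn]
  have hq0 : q ≠ 0 := by rintro rfl; rw [mul_zero] at hpq; exact hp hpq
  have hqdeg : q.natDegree = 0 := by
    have hmul := Polynomial.natDegree_mul hWmonic.ne_zero hq0
    rw [← hpq] at hmul
    omega
  obtain ⟨q0, hq0'⟩ := Polynomial.natDegree_eq_zero.mp hqdeg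
  have hq00 : q0 ≠ 0 := by rintro rfl; rw [map_zero] at hq0'; exact hq0 hq0'.symm
  have hcoeff : p.coeff n = q0 := by
    rw [hpq, ← hq0', Polynomial.coeff_mul_C, ← hWdeg, hWmonic.coeff_natDegree, one_mul]
  have htd0 : q0.totalDegree = 0 := by
    have h := totalDegree_coeff_finSuccEquiv_add_le
      (rename (⇑(Equiv.swap (0 : Fin 4) 3)) (P 3)) n (by
        rw [← ee_apply, ← hpdef, hcoeff]; exact hq00)
    rw [← ee_apply, ← hpdef, hcoeff, td_rename_swap] at h
    omega
  have hq0C : q0 = C (coeff 0 q0) := eq_C_of_td_zero _ htd0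
  set c : ℝ := coeff 0 q0 with hc
  have hcne : c ≠ 0 := by
    intro h; rw [h, map_zero] at hq0C; exact hq00 hq0C
  -- P 3 = C c * prod of linear factors
  set D : MvPolynomial (Fin 4) ℝ := (T.val.map fun k => X 3 - C k).prod with hD
  have hP3form : P 3 = C c * D := by
    apply ee.injective
    rw [map_mul, ee_C, ← hpdef, hD]
    rw [map_multiset_prod]
    rw [Multiset.map_map]
    have : (T.val.map fun k => ee (X 3 - C k)) =
        T.val.map fun k => Polynomial.X - Polynomial.C (C k) :=
      Multiset.map_congr rfl fun k _ => ee_lin k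
    rw [Function.comp_def, this, hpq, ← hq0', hq0C]
    rw [hW, hM, Multiset.map_map, Function.comp_def, mul_comm]
  -- evaluate at the complex point
  obtain ⟨K, hKeq⟩ := hK
  have heval : aeval (gg a) (chi P (Ga a)) = 0 := by
    rw [hKeq, map_mul, aeval_Ga a ha, mul_zero]
  rw [aeval_chi] at heval
  have hz0 : zz a ≠ 0 := by
    intro h
    have := congrArg Complex.im h
    rw [zz_im, Complex.zero_im] at this
    exact (hs_pos a ha).ne' this
  have hP3eval : aeval (gg a) (P 3) = 0 := by
    rcases mul_eq_zero.mp heval with h | h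
    · exact h
    · exact absurd h (by simp [hz0])
  -- but the evaluation is nonzero
  have hev : aeval (gg a) (P 3) = (c : ℂ) * ∏ x ∈ T, (zz a - (x : ℂ)) := by
    rw [hP3form, map_mul, aeval_C, hD, map_multiset_prod, Multiset.map_map,
      Finset.prod_eq_multiset_prod]
    congr 1
    refine Finset.prod_congr rfl fun x _ => ?_
    simp [gg]
  rw [hev] at hP3eval
  rcases mul_eq_zero.mp hP3eval with h | h
  · exact hcne (by exact_mod_cast h)
  · obtain ⟨x, hx, hxz⟩ := Finset.prod_eq_zero_iff.mp h
    exact zz_ne a ha x hxz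

lemma ee_X2 : ee (X 2) = Polynomial.C (X 1) := by
  have h2 : Equiv.swap (0 : Fin 4) 3 2 = Fin.succ 1 := by decide
  rw [ee]
  simp only [AlgEquiv.trans_apply, renameEquiv_apply, rename_X, h2, finSuccEquiv_X_succ]

lemma td_lin_le (k : ℝ) : (X 3 - C k : MvPolynomial (Fin 4) ℝ).totalDegree ≤ 1 := by
  rw [sub_eq_add_neg, ← map_neg]
  refine (totalDegree_add _ _).trans ?_
  simp [totalDegree_X, totalDegree_C]

section part2
variable (n : ℕ)

noncomputable def DD : MvPolynomial (Fin 4) ℝ := ∏ j ∈ Finset.range n, (X 3 - C (j : ℝ))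

lemma ee_DD : ee (DD n) = ∏ j ∈ Finset.range n, (Polynomial.X - Polynomial.C (C (j : ℝ))) := by
  rw [DD, map_prod]
  exact Finset.prod_congr rfl fun j _ => ee_lin _

lemma W_monic : (∏ j ∈ Finset.range n, (Polynomial.X - Polynomial.C (C (j : ℝ)) :
    Polynomial (MvPolynomial (Fin 3) ℝ))).Monic :=
  Polynomial.monic_prod_of_monic _ _ fun j _ => Polynomial.monic_X_sub_C _

lemma W_natDegree : (∏ j ∈ Finset.range n, (Polynomial.X - Polynomial.C (C (j : ℝ)) :
    Polynomial (MvPolynomial (Fin 3) ℝ))).natDegree = n := by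
  rw [Polynomial.natDegree_prod _ _ fun j _ => Polynomial.X_sub_C_ne_zero _]
  calc ∑ i ∈ Finset.range n, (Polynomial.X - Polynomial.C (C (i:ℝ)) :
        Polynomial (MvPolynomial (Fin 3) ℝ)).natDegree
      = ∑ _i ∈ Finset.range n, 1 :=
        Finset.sum_congr rfl fun j _ => Polynomial.natDegree_X_sub_C _
    _ = n := by simp

lemma W_coeff : (∏ j ∈ Finset.range n, (Polynomial.X - Polynomial.C (C (j : ℝ)) :
    Polynomial (MvPolynomial (Fin 3) ℝ))).coeff n = 1 := by
  set W : Polynomial (MvPolynomial (Fin 3) ℝ) :=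
    ∏ j ∈ Finset.range n, (Polynomial.X - Polynomial.C (C (j : ℝ))) with hWdef
  have hdeg : W.natDegree = n := W_natDegree n
  have hW := (W_monic n).coeff_natDegree
  rw [← hWdef, hdeg] at hW
  exact hW

lemma td_DD_le : (DD n).totalDegree ≤ n := by
  refine (totalDegree_finset_prod _ _).trans ?_
  calc ∑ j ∈ Finset.range n, (X 3 - C (j:ℝ) : MvPolynomial (Fin 4) ℝ).totalDegree
      ≤ ∑ _j ∈ Finset.range n, 1 := Finset.sum_le_sum fun j _ => td_lin_le _
    _ = n := by simp

lemma td_P3 : (X 2 * DD n).totalDegree = n + 1 := by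
  apply le_antisymm
  · refine (totalDegree_mul _ _).trans ?_
    have := td_DD_le n
    have hX : (X 2 : MvPolynomial (Fin 4) ℝ).totalDegree = 1 := totalDegree_X _
    omega
  · have hc : (ee (X 2 * DD n)).coeff n = X 1 := by
      rw [map_mul, ee_X2, ee_DD, Polynomial.coeff_C_mul, W_coeff, mul_one]
    have h := totalDegree_coeff_finSuccEquiv_add_le
      (rename (⇑(Equiv.swap (0 : Fin 4) 3)) (X 2 * DD n)) n (by
        rw [← ee_apply, hc]; exact X_ne_zero _)
    rw [← ee_apply, hc, totalDegree_X, td_rename_swap] at h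
    omega

lemma part2 (a : ℝ) (ha : 1 < a) (n : ℕ) (hn : 1 ≤ n) :
    ∃ P : Fin 4 → MvPolynomial (Fin 4) ℝ,
        (∃ K : MvPolynomial (Fin 4) ℝ, chi P (Ga a) = K * Ga a) ∧
        (Finset.univ.sup fun i => (P i).totalDegree) = n ∧
        {k : ℝ | (X 3 - C k) ∣ P 3}.Finite ∧
        {k : ℝ | (X 3 - C k) ∣ P 3}.ncard = n - 1 := by
  set m := n - 1 with hm
  refine ⟨![0, 0, -(X 3 * DD m), X 2 * DD m], ⟨0, ?_⟩, ?_, ?_⟩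
  · rw [chi, Fin.sum_univ_four]
    show (0 : MvPolynomial (Fin 4) ℝ) * _ + 0 * _ + (-(X 3 * DD m)) * pderiv 2 (Ga a)
      + (X 2 * DD m) * pderiv 3 (Ga a) = 0 * Ga a
    rw [pd2, pd3]; ring
  · have h3 : (X 2 * DD m).totalDegree = n := by rw [td_P3]; omega
    apply le_antisymm
    · apply Finset.sup_le
      intro i _
      fin_cases i
      · show (0 : MvPolynomial (Fin 4) ℝ).totalDegree ≤ n; simp
      · show (0 : MvPolynomial (Fin 4) ℝ).totalDegree ≤ n; simp
      · show (-(X 3 * DD m)).totalDegree ≤ n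
        rw [totalDegree_neg]
        refine (totalDegree_mul _ _).trans ?_
        have := td_DD_le m
        have hX : (X 3 : MvPolynomial (Fin 4) ℝ).totalDegree = 1 := totalDegree_X _
        omega
      · show (X 2 * DD m).totalDegree ≤ n; rw [h3]
    · have hle := Finset.le_sup (f := fun i => ((![0, 0, -(X 3 * DD m), X 2 * DD m] :
        Fin 4 → MvPolynomial (Fin 4) ℝ) i).totalDegree) (Finset.mem_univ 3)
      simp only [Matrix.cons_val_three] at hle
      calc n = (X 2 * DD m).totalDegree := h3.symm
        _ ≤ _ := hle
  · have hset : {k : ℝ | (X 3 - C k) ∣ (![0, 0, -(X 3 * DD m), X 2 * DD m] : Fin 4 → _) 3}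
        = (fun j : ℕ => (j : ℝ)) '' ↑(Finset.range m) := by
      show {k : ℝ | (X 3 - C k) ∣ X 2 * DD m} = _
      ext k
      simp only [Set.mem_setOf_eq, Set.mem_image, Finset.coe_range, Set.mem_Iio]
      constructor
      · intro hdvd
        rw [ee_dvd_iff, ee_lin, map_mul, ee_X2, ee_DD] at hdvd
        have hroot := Polynomial.dvd_iff_isRoot.mp hdvd
        rw [Polynomial.IsRoot, Polynomial.eval_mul, Polynomial.eval_C, Polynomial.eval_prod] at hroot
        have : ∀ j ∈ Finset.range m,
            Polynomial.eval (C k) (Polynomial.X - Polynomial.C (C (j:ℝ))) =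
              (C (k - (j:ℝ)) : MvPolynomial (Fin 3) ℝ) := by
          intro j _
          rw [Polynomial.eval_sub, Polynomial.eval_X, Polynomial.eval_C, map_sub]
        rw [Finset.prod_congr rfl this, ← map_prod] at hroot
        rcases mul_eq_zero.mp hroot with h | h
        · exact absurd h (X_ne_zero _)
        · have : (∏ j ∈ Finset.range m, (k - (j:ℝ))) = 0 := by
            have := (map_eq_zero_iff (C : ℝ →+* MvPolynomial (Fin 3) ℝ)
              (C_injective _ _)).mp h
            exact this
          obtain ⟨j, hj, hz⟩ := Finset.prod_eq_zero_iff.mp this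
          exact ⟨j, Finset.mem_range.mp hj, by linarith [sub_eq_zero.mp hz]⟩
      · rintro ⟨j, hj, rfl⟩
        exact Dvd.dvd.mul_left (Finset.dvd_prod_of_mem _ (Finset.mem_range.mpr hj)) _
    rw [hset]
    constructor
    · exact (Finset.finite_toSet _).image _
    · rw [Set.ncard_image_of_injective _ Nat.cast_injective, Set.ncard_coe_finset,
        Finset.card_range]


theorem stmt_18 (a : ℝ) (ha : 1 < a) :
    (∀ (n : ℕ) (P : Fin 4 → MvPolynomial (Fin 4) ℝ),
      (∃ K : MvPolynomial (Fin 4) ℝ, chi P (Ga a) = K * Ga a) →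
      (Finset.univ.sup fun i => (P i).totalDegree) = n →
      P 3 ≠ 0 →
      {k : ℝ | (X 3 - C k) ∣ P 3}.Finite ∧
      {k : ℝ | (X 3 - C k) ∣ P 3}.ncard ≤ n - 1) ∧
    (∀ n : ℕ, 1 ≤ n →
      ∃ P : Fin 4 → MvPolynomial (Fin 4) ℝ,
        (∃ K : MvPolynomial (Fin 4) ℝ, chi P (Ga a) = K * Ga a) ∧
        (Finset.univ.sup fun i => (P i).totalDegree) = n ∧
        {k : ℝ | (X 3 - C k) ∣ P 3}.Finite ∧
        {k : ℝ | (X 3 - C k) ∣ P 3}.ncard = n - 1) :=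
  ⟨fun n P hK hdeg hP3 => part1 a ha n P hK hdeg hP3,
   fun n hn => part2 a ha n hn⟩
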